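/- (Appendix D, identity (D7).) Assume the additional Appendix D setup. Let k ≥ 0 and let (c, ψ) be an unstable mode, c = c_r + i·c_i with c_i ≠ 0. Then for every real number r_c, ∫_{−L/2}^{L/2} ( (U(y) − r_c)² − (c_r − r_c)² − c_i² ) W(y) dy = ∫_{−L/2}^{L/2} (U(y) − r_c)·B(y)·|η(y)|² dy. -/

import Mathlib

open Set

noncomputable section

/-- An unstable mode for wavenumber `k`: a pair `(c, ψ)` (with derivative data `ψ', ψ''`)
with `Im c ≠ 0`, `ψ` twice continuously differentiable on `[-L/2, L/2]`, not identically
zero, vanishing at the boundary, and satisfying the eigenvalue equation. -/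
def IsUnstableMode (L Ld k : ℝ) (U q : ℝ → ℝ) (c : ℂ) (ψ ψ' ψ'' : ℝ → ℂ) : Prop :=
  c.im ≠ 0 ∧
  (∀ y ∈ Icc (-L/2) (L/2), HasDerivAt ψ (ψ' y) y) ∧
  (∀ y ∈ Icc (-L/2) (L/2), HasDerivAt ψ' (ψ'' y) y) ∧
  ContinuousOn ψ'' (Icc (-L/2) (L/2)) ∧
  (∃ y ∈ Icc (-L/2) (L/2), ψ y ≠ 0) ∧
  ψ (-L/2) = 0 ∧ ψ (L/2) = 0 ∧
  ∀ y ∈ Icc (-L/2) (L/2),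
    ψ'' y - ((k^2 + 1/Ld^2 : ℝ) : ℂ) * ψ y + ((q y : ℂ) / ((U y : ℂ) - c)) * ψ y = 0


open intervalIntegral in
/-- Appendix D identity (D7): for an unstable mode, with `η = ψ/(U − c)`,
`W = |η'|² + (k² + 1/L_d²)|η|²` and `B = q + U''`, for every real `r_c`,
`∫ ((U − r_c)² − (c_r − r_c)² − c_i²) W = ∫ (U − r_c) B |η|²`. -/
theorem appendixD_identity_D7
    (L Ld : ℝ) (hL : 0 < L) (hLd : 0 < Ld)
    (U q U' U'' : ℝ → ℝ)
    (hq : ContDiffOn ℝ 1 q (Icc (-L/2) (L/2)))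
    (hU' : ∀ y ∈ Icc (-L/2) (L/2), HasDerivAt U (U' y) y)
    (hU'' : ∀ y ∈ Icc (-L/2) (L/2), HasDerivAt U' (U'' y) y)
    (hU''c : ContinuousOn U'' (Icc (-L/2) (L/2)))
    (k : ℝ) (hk : 0 ≤ k) (c : ℂ) (ψ ψ' ψ'' : ℝ → ℂ)
    (hmode : IsUnstableMode L Ld k U q c ψ ψ' ψ'')
    -- Appendix D quantities
    (B : ℝ → ℝ) (hB : B = fun y => q y + U'' y)
    (η η' : ℝ → ℂ)
    (hη : η = fun y => ψ y / ((U y : ℂ) - c))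
    (hη' : η' = fun y =>
      (ψ' y * ((U y : ℂ) - c) - ψ y * (U' y : ℂ)) / ((U y : ℂ) - c) ^ 2)
    (W : ℝ → ℝ)
    (hW : W = fun y => Complex.normSq (η' y) + (k ^ 2 + 1 / Ld ^ 2) * Complex.normSq (η y)) :
    ∀ rc : ℝ,
      (∫ y in (-L/2)..(L/2),
          ((U y - rc) ^ 2 - (c.re - rc) ^ 2 - c.im ^ 2) * W y)
        = ∫ y in (-L/2)..(L/2), (U y - rc) * B y * Complex.normSq (η y) := by
  intro rc
  obtain ⟨hci, hψd, hψ'd, hψ''c, -, hψa, hψb, heq⟩ := hmode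
  have hab : (-L/2 : ℝ) ≤ L/2 := by linarith
  have huIcc : uIcc (-L/2 : ℝ) (L/2) = Icc (-L/2) (L/2) := uIcc_of_le hab
  set I : Set ℝ := Icc (-L/2) (L/2) with hI
  -- nonvanishing denominators
  have hd0 : ∀ y : ℝ, ((U y : ℂ) - c) ≠ 0 := by
    intro y h
    have := congrArg Complex.im h
    simp at this
    exact hci this
  have hdc0 : ∀ y : ℝ, ((U y : ℂ) - (starRingEnd ℂ) c) ≠ 0 := by
    intro y h
    have := congrArg Complex.im h
    simp at this
    exact hci this
  -- derivative facts
  have hdd : ∀ y ∈ I, HasDerivAt (fun t => ((U t : ℂ) - c)) ((U' y : ℂ)) y :=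
    fun y hy => ((hU' y hy).ofReal_comp).sub_const c
  have hηd : ∀ y ∈ I, HasDerivAt η (η' y) y := by
    intro y hy
    rw [hη, hη']
    exact (hψd y hy).div (hdd y hy) (hd0 y)
  have hηcd : ∀ y ∈ I, HasDerivAt (fun t => (starRingEnd ℂ) (η t))
      ((starRingEnd ℂ) (η' y)) y := fun y hy => (hηd y hy).star
  -- g and its derivative
  set g : ℝ → ℂ := fun y =>
    (((U y : ℂ) - c) * ψ' y - (U' y : ℂ) * ψ y) * (starRingEnd ℂ) (η y) with hg
  set G : ℝ → ℂ := fun y =>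
    ((U y : ℂ) - c) ^ 2 * ((W y : ℝ) : ℂ)
      - ((U y : ℂ) - c) * (B y : ℂ) * ((Complex.normSq (η y) : ℝ) : ℂ) with hG
  have hgd : ∀ y ∈ I, HasDerivAt g (G y) y := by
    intro y hy
    have hN : HasDerivAt (fun t => ((U t : ℂ) - c) * ψ' t - (U' t : ℂ) * ψ t)
        (((U' y : ℂ)) * ψ' y + ((U y : ℂ) - c) * ψ'' y
          - (((U'' y : ℂ)) * ψ y + ((U' y : ℂ)) * ψ' y)) y :=
      ((hdd y hy).mul (hψ'd y hy)).sub (((hU'' y hy).ofReal_comp).mul (hψd y hy))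
    have h := hN.mul (hηcd y hy)
    refine h.congr_deriv (Eq.symm ?_)
    -- algebraic identity
    set κc : ℂ := ((k^2 + 1/Ld^2 : ℝ) : ℂ) with hκc
    have hX : η y * ((U y : ℂ) - c) = ψ y := by
      simp only [hη]
      exact div_mul_cancel₀ _ (hd0 y)
    have hZ : η' y * ((U y : ℂ) - c) ^ 2
        = ψ' y * ((U y : ℂ) - c) - ψ y * (U' y : ℂ) := by
      simp only [hη']
      exact div_mul_cancel₀ _ (pow_ne_zero 2 (hd0 y))
    have hqd : ((q y : ℂ) / ((U y : ℂ) - c)) * ((U y : ℂ) - c) = (q y : ℂ) :=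
      div_mul_cancel₀ _ (hd0 y)
    have hode : ψ'' y * ((U y : ℂ) - c)
        = κc * ψ y * ((U y : ℂ) - c) - (q y : ℂ) * ψ y := by
      have h0 := heq y hy
      linear_combination ((U y : ℂ) - c) * h0 - ψ y * hqd
    have hBy : ((B y : ℝ) : ℂ) = (q y : ℂ) + (U'' y : ℂ) := by rw [hB]; push_cast; ring
    have hWy : ((W y : ℝ) : ℂ) = η' y * (starRingEnd ℂ) (η' y)
        + κc * (η y * (starRingEnd ℂ) (η y)) := by
      rw [hW]
      simp only [Complex.ofReal_add, Complex.ofReal_mul, Complex.mul_conj, hκc]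
    have hnsq : ((Complex.normSq (η y) : ℝ) : ℂ) = η y * (starRingEnd ℂ) (η y) :=
      (Complex.mul_conj _).symm
    rw [hG]
    simp only
    rw [hWy, hnsq, hBy]
    linear_combination ((starRingEnd ℂ) (η' y)) * hZ - ((starRingEnd ℂ) (η y)) * hode
      + (κc * ((U y : ℂ) - c) - ((q y : ℂ) + (U'' y : ℂ))) * ((starRingEnd ℂ) (η y)) * hX
  -- continuity facts (for integrability)
  have hUc : ContinuousOn U I := fun y hy => (hU' y hy).continuousAt.continuousWithinAt
  have hηc : ContinuousOn η I := fun y hy => (hηd y hy).continuousAt.continuousWithinAt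
  have hU'c : ContinuousOn U' I := fun y hy => (hU'' y hy).continuousAt.continuousWithinAt
  have hψc : ContinuousOn ψ I := fun y hy => (hψd y hy).continuousAt.continuousWithinAt
  have hψ'cc : ContinuousOn ψ' I := fun y hy => (hψ'd y hy).continuousAt.continuousWithinAt
  have hη'c : ContinuousOn η' I := by
    rw [hη']
    apply ContinuousOn.div
    · exact (hψ'cc.mul (((Complex.continuous_ofReal.comp_continuousOn hUc).sub continuousOn_const))).sub
        (hψc.mul (Complex.continuous_ofReal.comp_continuousOn hU'c))
    · exact ((Complex.continuous_ofReal.comp_continuousOn hUc).sub continuousOn_const).pow 2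
    · intro y hy; exact pow_ne_zero 2 (hd0 y)
  have hWc : ContinuousOn W I := by
    rw [hW]
    exact (Complex.continuous_normSq.comp_continuousOn hη'c).add
      (continuousOn_const.mul (Complex.continuous_normSq.comp_continuousOn hηc))
  have hBc : ContinuousOn B I := by
    rw [hB]; exact (hq.continuousOn).add hU''c
  have hnsqc : ContinuousOn (fun y => Complex.normSq (η y)) I :=
    Complex.continuous_normSq.comp_continuousOn hηc
  -- the four real integrands
  set f1 : ℝ → ℝ := fun y => ((U y - c.re)^2 - c.im^2) * W y with hf1
  set f2 : ℝ → ℝ := fun y => (U y - c.re) * B y * Complex.normSq (η y) with hf2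
  set f3 : ℝ → ℝ := fun y => (U y - c.re) * W y with hf3
  set f4 : ℝ → ℝ := fun y => B y * Complex.normSq (η y) with hf4
  have hf1c : ContinuousOn f1 I :=
    (((hUc.sub continuousOn_const).pow 2).sub continuousOn_const).mul hWc
  have hf2c : ContinuousOn f2 I := ((hUc.sub continuousOn_const).mul hBc).mul hnsqc
  have hf3c : ContinuousOn f3 I := (hUc.sub continuousOn_const).mul hWc
  have hf4c : ContinuousOn f4 I := hBc.mul hnsqc
  have hi1 : IntervalIntegrable f1 MeasureTheory.volume (-L/2) (L/2) :=
    (hf1c.mono (by rw [huIcc])).intervalIntegrable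
  have hi2 : IntervalIntegrable f2 MeasureTheory.volume (-L/2) (L/2) :=
    (hf2c.mono (by rw [huIcc])).intervalIntegrable
  have hi3 : IntervalIntegrable f3 MeasureTheory.volume (-L/2) (L/2) :=
    (hf3c.mono (by rw [huIcc])).intervalIntegrable
  have hi4 : IntervalIntegrable f4 MeasureTheory.volume (-L/2) (L/2) :=
    (hf4c.mono (by rw [huIcc])).intervalIntegrable
  -- re and im parts of G
  have hGre : ∀ y : ℝ, (G y).re = f1 y - f2 y := by
    intro y
    rw [hG]
    simp [Complex.mul_re, Complex.sub_re, Complex.sub_im, Complex.ofReal_re,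
      Complex.ofReal_im, Complex.sq_norm, pow_two, f1, f2] <;> ring
  have hGim : ∀ y : ℝ, (G y).im = c.im * (f4 y - 2 * f3 y) := by
    intro y
    rw [hG]
    simp [Complex.mul_im, Complex.mul_re, Complex.sub_re, Complex.sub_im, Complex.ofReal_re,
      Complex.ofReal_im, pow_two, f3, f4] <;> ring
  -- boundary values of g
  have hga : g (-L/2) = 0 := by
    have : η (-L/2) = 0 := by rw [hη]; simp [hψa]
    simp [hg, this]
  have hgb : g (L/2) = 0 := by
    have : η (L/2) = 0 := by rw [hη]; simp [hψb]
    simp [hg, this]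
  -- FTC for the real part
  have hre : (∫ y in (-L/2)..(L/2), (f1 y - f2 y)) = 0 := by
    have hd : ∀ y ∈ uIcc (-L/2 : ℝ) (L/2), HasDerivAt (fun t => (g t).re) (f1 y - f2 y) y := by
      intro y hy
      rw [huIcc] at hy
      have := (Complex.reCLM.hasFDerivAt.comp_hasDerivAt y (hgd y hy))
      simpa [hGre y, Function.comp_def] using this
    have hint : IntervalIntegrable (fun y => f1 y - f2 y) MeasureTheory.volume (-L/2) (L/2) :=
      hi1.sub hi2
    rw [intervalIntegral.integral_eq_sub_of_hasDerivAt hd hint, hga, hgb]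
    simp
  have him : (∫ y in (-L/2)..(L/2), (f4 y - 2 * f3 y)) = 0 := by
    have hd : ∀ y ∈ uIcc (-L/2 : ℝ) (L/2),
        HasDerivAt (fun t => (g t).im) (c.im * (f4 y - 2 * f3 y)) y := by
      intro y hy
      rw [huIcc] at hy
      have := (Complex.imCLM.hasFDerivAt.comp_hasDerivAt y (hgd y hy))
      simpa [hGim y, Function.comp_def] using this
    have hint : IntervalIntegrable (fun y => c.im * (f4 y - 2 * f3 y))
        MeasureTheory.volume (-L/2) (L/2) :=
      (hi4.sub (hi3.const_mul 2)).const_mul c.im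
    have h0 : (∫ y in (-L/2)..(L/2), c.im * (f4 y - 2 * f3 y)) = 0 := by
      rw [intervalIntegral.integral_eq_sub_of_hasDerivAt hd hint, hga, hgb]
      simp
    rw [intervalIntegral.integral_const_mul] at h0
    exact (mul_eq_zero.mp h0).resolve_left hci
  -- assemble
  have hI12 : (∫ y in (-L/2)..(L/2), f1 y) = ∫ y in (-L/2)..(L/2), f2 y := by
    have := intervalIntegral.integral_sub hi1 hi2
    rw [hre] at this
    linarith [this]
  have hI34 : (∫ y in (-L/2)..(L/2), f4 y) = 2 * ∫ y in (-L/2)..(L/2), f3 y := by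
    have := intervalIntegral.integral_sub hi4 (hi3.const_mul 2)
    rw [him, intervalIntegral.integral_const_mul] at this
    linarith [this]
  have hLHS : (∫ y in (-L/2)..(L/2), ((U y - rc) ^ 2 - (c.re - rc) ^ 2 - c.im ^ 2) * W y)
      = (∫ y in (-L/2)..(L/2), f1 y) + (2 * (c.re - rc)) * ∫ y in (-L/2)..(L/2), f3 y := by
    rw [← intervalIntegral.integral_const_mul,
      ← intervalIntegral.integral_add hi1 (hi3.const_mul _)]
    apply intervalIntegral.integral_congr
    intro y _
    simp only [f1, f3]
    ring
  have hRHS : (∫ y in (-L/2)..(L/2), (U y - rc) * B y * Complex.normSq (η y))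
      = (∫ y in (-L/2)..(L/2), f2 y) + (c.re - rc) * ∫ y in (-L/2)..(L/2), f4 y := by
    rw [← intervalIntegral.integral_const_mul,
      ← intervalIntegral.integral_add hi2 (hi4.const_mul _)]
    apply intervalIntegral.integral_congr
    intro y _
    simp only [f2, f4]
    ring
  rw [hLHS, hRHS, hI12, hI34]
  ring
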